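/- Let A be an integral domain containing ℚ and ∂ a derivation on A. Let a, b ∈ A be nonzero, and let n, m ∈ ℕ be minimal with ∂^{n+1}(a) = 0 and ∂^{m+1}(b) = 0. Then ∂^{n+m}(ab) = C(n+m, n) · ∂^n(a) · ∂^m(b), and in particular ∂^{n+m}(ab) ≠ 0. -/

import Mathlib

open Finset Nat

theorem iterate_leibniz {A : Type*} [CommRing A] [Algebra ℚ A]
    (D : Derivation ℚ A A) (n : ℕ) (a b : A) :
    (⇑D)^[n] (a * b) = ∑ ij ∈ antidiagonal n, n.choose ij.1 • ((⇑D)^[ij.1] a * (⇑D)^[ij.2] b) := by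
  induction n with
  | zero => simp
  | succ n ih =>
    rw [sum_antidiagonal_choose_succ_nsmul (M := A)
      (fun i j => (⇑D)^[i] a * (⇑D)^[j] b) n]
    have hmul : ∀ x y : A, D (x * y) = D x * y + x * D y := fun x y => by
      rw [D.leibniz]; ring_nf
    simp only [Function.iterate_succ_apply', ih, map_sum, map_nsmul, hmul, smul_add,
      sum_add_distrib]
    rw [add_comm]
    congr 1
    refine sum_congr rfl fun ⟨i, j⟩ hij ↦ ?_
    rw [n.choose_symm_of_eq_add (mem_antidiagonal.1 hij).symm]

theorem iterate_leibniz' {A : Type*} [CommRing A] [Algebra ℚ A]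
    (D : Derivation ℚ A A) (n : ℕ) (a b : A) :
    (⇑D)^[n] (a * b) = ∑ i ∈ range (n + 1), n.choose i • ((⇑D)^[i] a * (⇑D)^[n - i] b) := by
  rw [iterate_leibniz D n a b]
  exact sum_antidiagonal_eq_sum_range_succ (fun i j ↦ n.choose i • ((⇑D)^[i] a * (⇑D)^[j] b)) n

theorem stmt2 {A : Type*} [CommRing A] [IsDomain A] [Algebra ℚ A]
    (D : Derivation ℚ A A) (a b : A) (ha : a ≠ 0) (hb : b ≠ 0) (n m : ℕ)
    (han : (⇑D)^[n + 1] a = 0) (han' : (⇑D)^[n] a ≠ 0)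
    (hbm : (⇑D)^[m + 1] b = 0) (hbm' : (⇑D)^[m] b ≠ 0) :
    (⇑D)^[n + m] (a * b) = (n + m).choose n • ((⇑D)^[n] a * (⇑D)^[m] b) ∧
      (⇑D)^[n + m] (a * b) ≠ 0 := by
  haveI : CharZero A := charZero_of_injective_algebraMap (algebraMap ℚ A).injective
  have hDa : ∀ i, n < i → (⇑D)^[i] a = 0 := by
    intro i hi
    obtain ⟨k, rfl⟩ := Nat.exists_eq_add_of_le hi
    rw [add_comm, Function.iterate_add_apply, han]
    exact Function.iterate_fixed D.map_zero k
  have hDb : ∀ i, m < i → (⇑D)^[i] b = 0 := by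
    intro i hi
    obtain ⟨k, rfl⟩ := Nat.exists_eq_add_of_le hi
    rw [add_comm, Function.iterate_add_apply, hbm]
    exact Function.iterate_fixed D.map_zero k
  have key : (⇑D)^[n + m] (a * b) = (n + m).choose n • ((⇑D)^[n] a * (⇑D)^[m] b) := by
    rw [iterate_leibniz']
    rw [Finset.sum_eq_single n]
    · rw [Nat.add_sub_cancel_left]
    · intro i hi hne
      rcases lt_or_gt_of_ne hne with h | h
      · rw [hDb (n + m - i) (by omega), mul_zero, smul_zero]
      · rw [hDa i h, zero_mul, smul_zero]
    · intro h
      exact absurd (Finset.mem_range.2 (by omega)) h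
  refine ⟨key, ?_⟩
  rw [key, nsmul_eq_mul]
  apply mul_ne_zero
  · exact_mod_cast Nat.cast_ne_zero.2 (Nat.choose_pos (Nat.le_add_right n m)).ne'
  · exact mul_ne_zero han' hbm'
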